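/- Under the same setup (p odd, rank_p W = n−1, z₀ and λ₀ as in the key lemma), there exists an integer vector z₁ with eᵀ z₁ ≢ 0 (mod p) and (A − λ₀ I) z₁ ≡ p^c z₀ (mod p^τ) for some c ∈ {0, 1, …, τ}. -/

import Mathlib

open Matrix

/-- The walk matrix `[e, Ae, …, A^{n-1}e]` of a square matrix `A`. -/
noncomputable def walkMatrix {n : ℕ} {R : Type*} [CommRing R]
    (A : Matrix (Fin n) (Fin n) R) : Matrix (Fin n) (Fin n) R :=
  Matrix.of fun i j => ((A ^ (j : ℕ)) *ᵥ (fun _ => 1)) i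

/-- If every entry of `v` is divisible by `d`, so is every entry of `M *ᵥ v`. -/
private lemma dvd_mulVec_of {n : ℕ} (d : ℤ) (M : Matrix (Fin n) (Fin n) ℤ) (v : Fin n → ℤ)
    (h : ∀ i, d ∣ v i) : ∀ i, d ∣ (M *ᵥ v) i := by
  intro i
  simp only [Matrix.mulVec, dotProduct]
  exact Finset.dvd_sum fun j _ => Dvd.dvd.mul_left (h j) _

/-- Duality over `ℤ/N`: if every `k` with `Bᵀ k ≡ 0 (mod N)` has `k ⬝ x ≡ 0 (mod N)`,
then `x` is in the image of `B` mod `N`. -/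
private lemma qf_dual {n : ℕ} (N : ℤ) (hN : N ≠ 0) (B : Matrix (Fin n) (Fin n) ℤ)
    (x : Fin n → ℤ)
    (hdual : ∀ k : Fin n → ℤ, (∀ i, N ∣ (Bᵀ *ᵥ k) i) → N ∣ k ⬝ᵥ x) :
    ∃ w : Fin n → ℤ, ∀ i, N ∣ ((B *ᵥ w) i - x i) := by
  classical
  by_contra hx
  set S : AddSubgroup (Fin n → ℤ) :=
    { carrier := {v | ∃ w : Fin n → ℤ, ∀ i, N ∣ ((B *ᵥ w) i - v i)}
      zero_mem' := ⟨0, fun i => by simp⟩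
      add_mem' := by
        rintro a b ⟨wa, ha⟩ ⟨wb, hb⟩
        refine ⟨wa + wb, fun i => ?_⟩
        have h := dvd_add (ha i) (hb i)
        have : (B *ᵥ (wa + wb)) i - (a + b) i
            = ((B *ᵥ wa) i - a i) + ((B *ᵥ wb) i - b i) := by
          simp [Matrix.mulVec_add]; ring
        rw [this]; exact h
      neg_mem' := by
        rintro a ⟨w, hw⟩
        refine ⟨-w, fun i => ?_⟩
        have : (B *ᵥ (-w)) i - (-a) i = -((B *ᵥ w) i - a i) := by
          simp [Matrix.mulVec_neg]; ring
        rw [this]; exact (hw i).neg_right } with hS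
  have hxS : x ∉ S := hx
  have hmk : (QuotientAddGroup.mk' S x) ≠ 0 := by
    intro h0
    exact hxS ((QuotientAddGroup.eq_zero_iff x).mp h0)
  obtain ⟨c, hc⟩ := CharacterModule.exists_character_apply_ne_zero_of_ne_zero hmk
  set ψ : (Fin n → ℤ) →+ AddCircle (1 : ℚ) :=
    AddMonoidHom.comp c (QuotientAddGroup.mk' S) with hψ
  have ψS : ∀ v ∈ S, ψ v = 0 := by
    intro v hv
    have h0 : (QuotientAddGroup.mk' S) v = 0 := (QuotientAddGroup.eq_zero_iff v).mpr hv
    rw [hψ]; show c ((QuotientAddGroup.mk' S) v) = 0; rw [h0, map_zero]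
  set χ : ℚ →+ AddCircle (1 : ℚ) := QuotientAddGroup.mk' (AddSubgroup.zmultiples (1:ℚ)) with hχ
  have χ0 : ∀ q : ℚ, χ q = 0 ↔ ∃ m : ℤ, (m : ℚ) = q := by
    intro q
    rw [hχ, QuotientAddGroup.mk'_apply, QuotientAddGroup.eq_zero_iff]
    simp [AddSubgroup.mem_zmultiples_iff]
  have tor : ∀ i : Fin n, ∃ m : ℤ, ψ (Pi.single i 1) = χ ((m : ℚ) / N) := by
    intro i
    obtain ⟨q, hq⟩ := QuotientAddGroup.mk'_surjective
      (AddSubgroup.zmultiples (1:ℚ)) (ψ (Pi.single i 1))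
    have hNe : (N • (Pi.single i 1 : Fin n → ℤ)) ∈ S := by
      refine ⟨0, fun j => ?_⟩
      simp only [Matrix.mulVec_zero, Pi.zero_apply, Pi.smul_apply, smul_eq_mul, zero_sub,
        dvd_neg]
      exact Dvd.intro _ rfl
    have h0 : N • ψ (Pi.single i 1) = 0 := by
      rw [← map_zsmul]; exact ψS _ hNe
    rw [← hq, ← map_zsmul] at h0
    obtain ⟨m, hm⟩ := (χ0 _).mp h0
    refine ⟨m, ?_⟩
    rw [← hq]
    congr 1
    have hNQ : (N : ℚ) ≠ 0 := Int.cast_ne_zero.mpr hN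
    field_simp
    rw [hm]
    simp [zsmul_eq_mul, mul_comm]
  choose k hk using tor
  have ψv : ∀ v : Fin n → ℤ, ψ v = χ (((k ⬝ᵥ v : ℤ) : ℚ) / N) := by
    intro v
    have hv : v = ∑ i, (v i) • Pi.single i (1:ℤ) := by
      funext j
      simp [Pi.single_apply, Finset.sum_apply]
    calc ψ v = ψ (∑ i, (v i) • Pi.single i (1:ℤ)) := by rw [← hv]
      _ = ∑ i, (v i) • ψ (Pi.single i (1:ℤ)) := by
          rw [map_sum]
          exact Finset.sum_congr rfl fun i _ => map_zsmul ψ (v i) (Pi.single i 1)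
      _ = ∑ i, χ (((v i * k i : ℤ) : ℚ) / N) := by
          refine Finset.sum_congr rfl fun i _ => ?_
          rw [hk i, ← map_zsmul]
          congr 1
          rw [zsmul_eq_mul]
          push_cast
          ring
      _ = χ (∑ i, ((v i * k i : ℤ) : ℚ) / N) := by rw [map_sum]
      _ = χ (((k ⬝ᵥ v : ℤ) : ℚ) / N) := by
          congr 1
          rw [← Finset.sum_div]
          congr 1
          push_cast [dotProduct]
          rw [Finset.sum_congr rfl fun i _ => mul_comm ((v i : ℚ)) (k i : ℚ)]
  have hker : ∀ w : Fin n → ℤ, N ∣ k ⬝ᵥ (B *ᵥ w) := by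
    intro w
    have h0 : ψ (B *ᵥ w) = 0 := ψS _ ⟨w, fun i => by simp⟩
    rw [ψv] at h0
    obtain ⟨m, hm⟩ := (χ0 _).mp h0
    refine ⟨m, ?_⟩
    have hNQ : (N : ℚ) ≠ 0 := Int.cast_ne_zero.mpr hN
    have : ((k ⬝ᵥ (B *ᵥ w) : ℤ) : ℚ) = (N : ℚ) * m := by
      field_simp at hm
      linarith [hm]
    exact_mod_cast this
  have hBt : ∀ j, N ∣ (Bᵀ *ᵥ k) j := by
    intro j
    have h := hker (Pi.single j 1)
    have : k ⬝ᵥ (B *ᵥ Pi.single j 1) = (Bᵀ *ᵥ k) j := by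
      rw [Matrix.mulVec_single]
      simp [Matrix.mulVec, dotProduct, Matrix.transpose_apply, mul_comm]
    rwa [this] at h
  obtain ⟨m, hm⟩ := hdual k hBt
  apply hc
  have hfin : ψ x = 0 := by
    have hNQ : (N : ℚ) ≠ 0 := Int.cast_ne_zero.mpr hN
    rw [ψv, hm, χ0]
    refine ⟨m, ?_⟩
    push_cast
    rw [mul_comm, mul_div_assoc, div_self hNQ, mul_one]
  exact hfin

/-- Mod `p`, the kernel of `Wᵀ` is spanned by `z₀`. -/
private lemma kernelW {n : ℕ} (p : ℕ) (hp : p.Prime) (hn : 0 < n)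
    (W : Matrix (Fin n) (Fin n) ℤ)
    (hrank : (W.map (Int.cast : ℤ → ZMod p)).rank = n - 1)
    (z₀ : Fin n → ℤ) (hz₀p : ¬ (∀ i, (p : ℤ) ∣ z₀ i))
    (hWz₀ : ∀ i, (p : ℤ) ∣ (Wᵀ *ᵥ z₀) i) :
    ∀ v : Fin n → ℤ, (∀ j, (p : ℤ) ∣ (Wᵀ *ᵥ v) j) →
      ∃ t : ℤ, ∀ i, (p : ℤ) ∣ (v i - t * z₀ i) := by
  classical
  haveI : Fact p.Prime := ⟨hp⟩
  set c : ℤ → ZMod p := Int.cast with hc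
  set M : Matrix (Fin n) (Fin n) (ZMod p) := (Wᵀ).map c with hM
  have hcast : ∀ v : Fin n → ℤ, ∀ j, (M *ᵥ fun i => (c (v i))) j = c ((Wᵀ *ᵥ v) j) := by
    intro v j
    simp only [Matrix.mulVec, dotProduct, Matrix.map_apply, hM, hc]
    push_cast
    rfl
  have hmem : ∀ v : Fin n → ℤ, (∀ j, (p : ℤ) ∣ (Wᵀ *ᵥ v) j) →
      (fun i => c (v i)) ∈ LinearMap.ker M.mulVecLin := by
    intro v hv
    rw [LinearMap.mem_ker]
    funext j
    rw [Matrix.mulVecLin_apply, hcast v j]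
    exact (ZMod.intCast_zmod_eq_zero_iff_dvd _ p).mpr (hv j)
  set z' : Fin n → ZMod p := fun i => c (z₀ i) with hz'
  have hz'0 : z' ≠ 0 := by
    intro h
    apply hz₀p
    intro i
    have := congrFun h i
    exact (ZMod.intCast_zmod_eq_zero_iff_dvd _ p).mp this
  have hrankM : M.rank = n - 1 := by
    rw [hM, Matrix.transpose_map, Matrix.rank_transpose]
    exact hrank
  have hker_rank : Module.finrank (ZMod p) (LinearMap.ker M.mulVecLin) = 1 := by
    have h1 := LinearMap.finrank_range_add_finrank_ker M.mulVecLin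
    have h2 : Module.finrank (ZMod p) (Fin n → ZMod p) = n := by
      simp [Module.finrank_pi]
    rw [h2] at h1
    have h3 : Module.finrank (ZMod p) (LinearMap.range M.mulVecLin) = n - 1 := hrankM
    omega
  have hspan : Submodule.span (ZMod p) {z'} = LinearMap.ker M.mulVecLin := by
    apply Submodule.eq_of_le_of_finrank_le
    · rw [Submodule.span_le, Set.singleton_subset_iff]
      exact hmem z₀ hWz₀
    · rw [hker_rank, finrank_span_singleton hz'0]
  intro v hv
  have hvmem : (fun i => c (v i)) ∈ Submodule.span (ZMod p) {z'} := by
    rw [hspan]; exact hmem v hv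
  obtain ⟨a, ha⟩ := Submodule.mem_span_singleton.mp hvmem
  haveI : NeZero p := ⟨hp.ne_zero⟩
  refine ⟨(a.val : ℤ), fun i => ?_⟩
  rw [← ZMod.intCast_zmod_eq_zero_iff_dvd]
  push_cast
  have haa : ((a.val : ℕ) : ZMod p) = a := ZMod.natCast_rightInverse a
  have hthis := congrFun ha i
  simp only [Pi.smul_apply, smul_eq_mul, hz'] at hthis
  rw [hc] at hthis
  rw [haa, ← hthis]
  simp

/-- Row sums of `A^m y` are divisible by `p` for a solution `y` of the key congruence. -/
private lemma rowsum_aux {n : ℕ} (p : ℕ) (τ : ℕ) (hτ : 1 ≤ τ)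
    (A : Matrix (Fin n) (Fin n) ℤ) (lam : ℤ) (z₀ : Fin n → ℤ)
    (hpow : ∀ (j : ℕ) (i : Fin n), (p:ℤ)^τ ∣ ((A^j *ᵥ z₀) i - lam^j * z₀ i))
    (hez₀ : (p:ℤ) ∣ ∑ i, z₀ i)
    (y : Fin n → ℤ) (c : ℕ)
    (hy : ∀ i, (p:ℤ)^τ ∣ (((A - lam • (1 : Matrix (Fin n) (Fin n) ℤ)) *ᵥ y) i
      - (p:ℤ)^c * z₀ i))
    (hey : (p:ℤ) ∣ ∑ i, y i) :
    ∀ m : ℕ, (p:ℤ) ∣ ∑ i, (A^m *ᵥ y) i := by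
  have hp1 : (p:ℤ) ∣ (p:ℤ)^τ := dvd_pow_self _ (by omega)
  intro m
  induction m with
  | zero => simpa [Matrix.one_mulVec] using hey
  | succ m ih =>
    have hsucc : A^(m+1) *ᵥ y = A^m *ᵥ (A *ᵥ y) := by
      rw [Matrix.mulVec_mulVec, ← pow_succ]
    have hz : (p:ℤ) ∣ ∑ i, (A^m *ᵥ z₀) i := by
      have hsplit : ∑ i, (A^m *ᵥ z₀) i
          = (∑ i, ((A^m *ᵥ z₀) i - lam^m * z₀ i)) + lam^m * ∑ i, z₀ i := by
        rw [Finset.mul_sum, ← Finset.sum_add_distrib]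
        exact Finset.sum_congr rfl fun i _ => by ring
      rw [hsplit]
      exact dvd_add (Finset.dvd_sum fun i _ => dvd_trans hp1 (hpow m i)) (hez₀.mul_left _)
    have hAy : A *ᵥ y =
        (fun i => ((A - lam • (1 : Matrix (Fin n) (Fin n) ℤ)) *ᵥ y) i - (p:ℤ)^c * z₀ i)
        + ((p:ℤ)^c • z₀) + lam • y := by
      funext i
      simp only [Pi.add_apply, Pi.smul_apply, smul_eq_mul, Matrix.sub_mulVec,
        Matrix.smul_mulVec, Matrix.one_mulVec, Pi.sub_apply]
      ring
    rw [hsucc, hAy, Matrix.mulVec_add, Matrix.mulVec_add, Matrix.mulVec_smul,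
      Matrix.mulVec_smul]
    have hsum : ∑ i, ((A^m *ᵥ (fun i => ((A - lam • (1 : Matrix (Fin n) (Fin n) ℤ)) *ᵥ y) i
          - (p:ℤ)^c * z₀ i)) + ((p:ℤ)^c • (A^m *ᵥ z₀)) + (lam • (A^m *ᵥ y))) i
        = (∑ i, (A^m *ᵥ (fun i => ((A - lam • (1 : Matrix (Fin n) (Fin n) ℤ)) *ᵥ y) i
            - (p:ℤ)^c * z₀ i)) i)
          + (p:ℤ)^c * (∑ i, (A^m *ᵥ z₀) i) + lam * (∑ i, (A^m *ᵥ y) i) := by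
      rw [Finset.mul_sum, Finset.mul_sum, ← Finset.sum_add_distrib, ← Finset.sum_add_distrib]
      exact Finset.sum_congr rfl fun i _ => by simp [smul_eq_mul]
    rw [hsum]
    exact dvd_add (dvd_add
      (Finset.dvd_sum fun i _ => dvd_trans hp1 (dvd_mulVec_of _ _ _ hy i))
      (hz.mul_left _)) (ih.mul_left _)

/-- Powers of `A` applied to an approximate eigenvector. -/
private lemma pow_cong {n : ℕ} (p : ℕ) (τ : ℕ) (A : Matrix (Fin n) (Fin n) ℤ) (lam : ℤ)
    (z₀ : Fin n → ℤ)
    (h : ∀ i, (p:ℤ)^τ ∣ ((A *ᵥ z₀) i - lam * z₀ i)) :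
    ∀ (j : ℕ) (i : Fin n), (p:ℤ)^τ ∣ ((A^j *ᵥ z₀) i - lam^j * z₀ i) := by
  intro j
  induction j with
  | zero => intro i; simp [Matrix.one_mulVec]
  | succ j ih =>
    intro i
    have hA : A^(j+1) *ᵥ z₀ = A *ᵥ (A^j *ᵥ z₀) := by
      rw [Matrix.mulVec_mulVec, ← pow_succ']
    rw [hA]
    have hsplit : (A *ᵥ (A ^ j *ᵥ z₀)) i - lam ^ (j+1) * z₀ i
        = (A *ᵥ (fun i' => (A ^ j *ᵥ z₀) i' - lam ^ j * z₀ i')) i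
          + lam ^ j * ((A *ᵥ z₀) i - lam * z₀ i) := by
      have hdec : (A ^ j *ᵥ z₀ : Fin n → ℤ)
          = (fun i' => (A ^ j *ᵥ z₀) i' - lam ^ j * z₀ i') + lam ^ j • z₀ := by
        funext i'; simp [Pi.add_apply, smul_eq_mul]
      calc (A *ᵥ (A ^ j *ᵥ z₀)) i - lam ^ (j+1) * z₀ i
          = (A *ᵥ ((fun i' => (A ^ j *ᵥ z₀) i' - lam ^ j * z₀ i') + lam ^ j • z₀)) i
            - lam ^ (j+1) * z₀ i := by rw [← hdec]
        _ = (A *ᵥ (fun i' => (A ^ j *ᵥ z₀) i' - lam ^ j * z₀ i')) i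
            + lam ^ j * ((A *ᵥ z₀) i - lam * z₀ i) := by
            rw [Matrix.mulVec_add, Matrix.mulVec_smul]
            simp only [Pi.add_apply, Pi.smul_apply, smul_eq_mul]
            ring
    rw [hsplit]
    exact dvd_add (dvd_mulVec_of _ _ _ ih i) ((h i).mul_left _)

/-- Under the setup of the key lemma, there is an integer vector `z₁` with
`eᵀ z₁ ≢ 0 (mod p)` and `(A - λ₀ I) z₁ ≡ p^c z₀ (mod p^τ)` for some
`c ∈ {0, 1, …, τ}`. -/
theorem exists_z1_with_nonzero_row_sum
    {n : ℕ} (p : ℕ) (hp : p.Prime) (hodd : Odd p) (τ : ℕ) (hτ : 1 ≤ τ)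
    (A : Matrix (Fin n) (Fin n) ℤ) (hsymm : Aᵀ = A)
    (W : Matrix (Fin n) (Fin n) ℤ) (hW : W = walkMatrix A)
    (hrank : (W.map (Int.cast : ℤ → ZMod p)).rank = n - 1)
    (lam : ℤ) (z₀ : Fin n → ℤ) (hz₀p : ¬ (∀ i, (p : ℤ) ∣ z₀ i))
    (hAz₀ : ∀ i, (p : ℤ) ^ τ ∣ ((A - lam • (1 : Matrix (Fin n) (Fin n) ℤ)) *ᵥ z₀) i)
    (hz₀z₀ : (p : ℤ) ^ (2 * τ) ∣ z₀ ⬝ᵥ z₀)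
    (hz₀Az₀ : (p : ℤ) ^ (2 * τ) ∣ z₀ ⬝ᵥ (A *ᵥ z₀))
    (hWz₀ : ∀ i, (p : ℤ) ^ τ ∣ (Wᵀ *ᵥ z₀) i) :
    ∃ (z₁ : Fin n → ℤ) (c : ℕ), c ≤ τ ∧
      ¬ ((p : ℤ) ∣ ∑ i, z₁ i) ∧
      ∀ i, (p : ℤ) ^ τ ∣
        ((A - lam • (1 : Matrix (Fin n) (Fin n) ℤ)) *ᵥ z₁ - ((p : ℤ) ^ c) • z₀) i := by
  classical
  set B := A - lam • (1 : Matrix (Fin n) (Fin n) ℤ) with hB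
  have hpne : (p:ℤ) ≠ 0 := by exact_mod_cast hp.ne_zero
  have hp1 : (p:ℤ) ∣ (p:ℤ)^τ := dvd_pow_self _ (by omega)
  have hn : 0 < n := by
    by_contra h
    push_neg at h
    exact hz₀p (fun i => absurd i.isLt (by omega))
  have hBsymm : Bᵀ = B := by
    rw [hB, Matrix.transpose_sub, hsymm, Matrix.transpose_smul, Matrix.transpose_one]
  have hBapp : ∀ (v : Fin n → ℤ) (i : Fin n), (B *ᵥ v) i = (A *ᵥ v) i - lam * v i := by
    intro v i
    rw [hB, Matrix.sub_mulVec, Matrix.smul_mulVec, Matrix.one_mulVec]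
    simp [smul_eq_mul]
  have hpow : ∀ (j : ℕ) (i : Fin n), (p:ℤ)^τ ∣ ((A^j *ᵥ z₀) i - lam^j * z₀ i) :=
    pow_cong p τ A lam z₀ (fun i => by rw [← hBapp]; exact hAz₀ i)
  have hz₀B : ∀ u : Fin n → ℤ, (p:ℤ)^τ ∣ z₀ ⬝ᵥ (B *ᵥ u) := by
    intro u
    rw [dotProduct_mulVec, ← Matrix.mulVec_transpose, hBsymm]
    exact Finset.dvd_sum fun i _ => (hAz₀ i).mul_right _
  -- Case 1 : the row sum of z₀ is nonzero mod p
  by_cases hez₀ : (p:ℤ) ∣ ∑ i, z₀ i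
  case neg =>
    refine ⟨z₀, τ, le_rfl, hez₀, fun i => ?_⟩
    have : (B *ᵥ z₀ - ((p:ℤ)^τ) • z₀) i = (B *ᵥ z₀) i - (p:ℤ)^τ * z₀ i := by
      simp [smul_eq_mul]
    rw [this]
    exact dvd_sub (hAz₀ i) (dvd_mul_right _ _)
  -- Case 2 : the row sum of z₀ is zero mod p; argue by contradiction.
  by_contra H
  have H' : ∀ (y : Fin n → ℤ) (c : ℕ), c ≤ τ →
      (∀ i, (p:ℤ)^τ ∣ ((B *ᵥ y) i - (p:ℤ)^c * z₀ i)) → (p:ℤ) ∣ ∑ i, y i := by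
    intro y c hcle hy
    by_contra hne
    exact H ⟨y, c, hcle, hne, fun i => by
      have : (B *ᵥ y - ((p:ℤ)^c) • z₀) i = (B *ᵥ y) i - (p:ℤ)^c * z₀ i := by
        simp [smul_eq_mul]
      rw [this]; exact hy i⟩
  have hWz₀' : ∀ i, (p:ℤ) ∣ (Wᵀ *ᵥ z₀) i := fun i => dvd_trans hp1 (hWz₀ i)
  have hWy : ∀ (v : Fin n → ℤ) (j : Fin n),
      ((walkMatrix A)ᵀ *ᵥ v) j = ∑ i, (A^(j:ℕ) *ᵥ v) i := by
    intro v j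
    have h1 : ((walkMatrix A)ᵀ *ᵥ v) j = (A^(j:ℕ) *ᵥ (fun _ => (1:ℤ))) ⬝ᵥ v := by
      simp [Matrix.mulVec, dotProduct, walkMatrix, Matrix.transpose_apply]
    have h2 : (A^(j:ℕ) *ᵥ (fun _ => (1:ℤ))) = (fun _ => (1:ℤ)) ᵥ* A^(j:ℕ) := by
      rw [← Matrix.mulVec_transpose, Matrix.transpose_pow, hsymm]
    rw [h1, h2, ← dotProduct_mulVec]
    simp [dotProduct]
  -- every solution is congruent to a multiple of z₀ mod p
  have hkm : ∀ (y : Fin n → ℤ) (c : ℕ), c ≤ τ →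
      (∀ i, (p:ℤ)^τ ∣ ((B *ᵥ y) i - (p:ℤ)^c * z₀ i)) →
      ∃ t, ∀ i, (p:ℤ) ∣ (y i - t * z₀ i) := by
    intro y c hcle hy
    have hey : (p:ℤ) ∣ ∑ i, y i := H' y c hcle hy
    have hsum := rowsum_aux p τ hτ A lam z₀ hpow hez₀ y c
      (fun i => by rw [← hB] at *; exact hy i) hey
    refine kernelW p hp hn W hrank z₀ hz₀p hWz₀' y ?_
    intro j
    rw [hW, hWy]
    exact hsum (j:ℕ)
  -- downward induction producing solutions for smaller exponents
  have Sol : ∀ m : ℕ, m ≤ τ →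
      ∃ y : Fin n → ℤ, ∀ i, (p:ℤ)^τ ∣ ((B *ᵥ y) i - (p:ℤ)^(τ - m) * z₀ i) := by
    intro m
    induction m with
    | zero =>
      intro _
      refine ⟨0, fun i => ?_⟩
      rw [Matrix.mulVec_zero]
      simp only [Pi.zero_apply, zero_sub, dvd_neg, Nat.sub_zero]
      exact dvd_mul_right _ _
    | succ m ih =>
      intro hm
      obtain ⟨y, hy⟩ := ih (by omega)
      set c : ℕ := τ - m with hcdef
      have hc1 : 1 ≤ c := by omega
      have hcle : c ≤ τ := by omega
      have hτm : τ - (m+1) = c - 1 := by omega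
      obtain ⟨t, ht⟩ := hkm y c hcle hy
      set u : Fin n → ℤ := fun i => (y i - t * z₀ i) / p with hu
      have hup : ∀ i, (p:ℤ) * u i = y i - t * z₀ i := fun i => Int.mul_ediv_cancel' (ht i)
      have hyu : y = t • z₀ + (p:ℤ) • u := by
        funext i
        have := hup i
        simp only [Pi.add_apply, Pi.smul_apply, smul_eq_mul]
        linarith
      have hcsplit : (p:ℤ)^c = p * (p:ℤ)^(c-1) := by
        rw [← pow_succ']
        congr 1
        omega
      have hτsplit : (p:ℤ)^τ = p * (p:ℤ)^(τ-1) := by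
        rw [← pow_succ']
        congr 1
        omega
      have hτsplit' : (p:ℤ)^τ = (p:ℤ)^(τ-1) * p := by
        rw [← pow_succ]
        congr 1
        omega
      have hBu : ∀ i, (p:ℤ)^(τ-1) ∣ ((B *ᵥ u) i - (p:ℤ)^(c-1) * z₀ i) := by
        intro i
        have h2 : (B *ᵥ y) i = t * (B *ᵥ z₀) i + p * (B *ᵥ u) i := by
          rw [hyu, Matrix.mulVec_add, Matrix.mulVec_smul, Matrix.mulVec_smul]
          simp [smul_eq_mul]
        have h3 : (p:ℤ)^τ ∣ t * (B *ᵥ z₀) i := (hAz₀ i).mul_left t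
        have h4 : (p:ℤ)^τ ∣ p * (B *ᵥ u) i - (p:ℤ)^c * z₀ i := by
          have h5 := dvd_sub (hy i) h3
          have h6 : (B *ᵥ y) i - (p:ℤ)^c * z₀ i - t * (B *ᵥ z₀) i
              = p * (B *ᵥ u) i - (p:ℤ)^c * z₀ i := by
            rw [h2]; ring
          rwa [h6] at h5
        have h7 : p * (B *ᵥ u) i - (p:ℤ)^c * z₀ i
            = p * ((B *ᵥ u) i - (p:ℤ)^(c-1) * z₀ i) := by
          rw [hcsplit]; ring
        rw [h7, hτsplit] at h4
        exact (mul_dvd_mul_iff_left hpne).mp h4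
      set r : Fin n → ℤ := fun i => ((B *ᵥ u) i - (p:ℤ)^(c-1) * z₀ i) / (p:ℤ)^(τ-1) with hr
      have hrr : ∀ i, (p:ℤ)^(τ-1) * r i = (B *ᵥ u) i - (p:ℤ)^(c-1) * z₀ i :=
        fun i => Int.mul_ediv_cancel' (hBu i)
      have hz₀r : (p:ℤ) ∣ z₀ ⬝ᵥ r := by
        have key : (p:ℤ)^(τ-1) * (z₀ ⬝ᵥ r)
            = z₀ ⬝ᵥ (B *ᵥ u) - (p:ℤ)^(c-1) * (z₀ ⬝ᵥ z₀) := by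
          calc (p:ℤ)^(τ-1) * (z₀ ⬝ᵥ r) = ∑ i, z₀ i * ((p:ℤ)^(τ-1) * r i) := by
                rw [dotProduct, Finset.mul_sum]
                exact Finset.sum_congr rfl fun i _ => by ring
            _ = ∑ i, (z₀ i * (B *ᵥ u) i - (p:ℤ)^(c-1) * (z₀ i * z₀ i)) := by
                refine Finset.sum_congr rfl fun i _ => ?_
                rw [hrr i]; ring
            _ = z₀ ⬝ᵥ (B *ᵥ u) - (p:ℤ)^(c-1) * (z₀ ⬝ᵥ z₀) := by
                rw [Finset.sum_sub_distrib, ← Finset.mul_sum]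
                rfl
        have h8 : (p:ℤ)^τ ∣ (p:ℤ)^(τ-1) * (z₀ ⬝ᵥ r) := by
          rw [key]
          refine dvd_sub (hz₀B u) ?_
          exact ((dvd_trans (pow_dvd_pow _ (by omega : τ ≤ 2*τ)) hz₀z₀).mul_left _)
        rw [hτsplit'] at h8
        exact (mul_dvd_mul_iff_left (pow_ne_zero _ hpne)).mp h8
      -- apply the duality lemma
      obtain ⟨w, hw⟩ := qf_dual ((p:ℤ)^τ) (pow_ne_zero _ hpne) B
        (fun i => (p:ℤ)^(τ-1) * r i) (by
          intro kk hkk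
          rw [hBsymm] at hkk
          have hkksol : ∀ i, (p:ℤ)^τ ∣ ((B *ᵥ kk) i - (p:ℤ)^τ * z₀ i) :=
            fun i => dvd_sub (hkk i) (dvd_mul_right _ _)
          obtain ⟨s, hs⟩ := hkm kk τ le_rfl hkksol
          have hx : kk ⬝ᵥ (fun i => (p:ℤ)^(τ-1) * r i) = (p:ℤ)^(τ-1) * (kk ⬝ᵥ r) := by
            rw [dotProduct, dotProduct, Finset.mul_sum]
            exact Finset.sum_congr rfl fun i _ => by ring
          rw [hx, hτsplit']
          refine mul_dvd_mul_left _ ?_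
          have hdiff : kk ⬝ᵥ r = (∑ i, (kk i - s * z₀ i) * r i) + s * (z₀ ⬝ᵥ r) := by
            rw [dotProduct, dotProduct, Finset.mul_sum,
              ← Finset.sum_add_distrib]
            exact Finset.sum_congr rfl fun i _ => by ring
          rw [hdiff]
          exact dvd_add (Finset.dvd_sum fun i _ => (hs i).mul_right _) (hz₀r.mul_left _))
      refine ⟨u - w, fun i => ?_⟩
      rw [hτm]
      have heq : (B *ᵥ (u - w)) i - (p:ℤ)^(c-1) * z₀ i
          = -((B *ᵥ w) i - (p:ℤ)^(τ-1) * r i) := by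
        rw [Matrix.mulVec_sub]
        have h9 := hrr i
        simp only [Pi.sub_apply]
        linarith
      rw [heq]
      exact dvd_neg.mpr (hw i)
  -- conclude : a solution with c = 0 forces z₀ ≡ 0 mod p
  obtain ⟨y, hy⟩ := Sol τ le_rfl
  rw [Nat.sub_self] at hy
  obtain ⟨t, ht⟩ := hkm y 0 (by omega) hy
  apply hz₀p
  intro i
  have h1 : (p:ℤ) ∣ (B *ᵥ y) i - z₀ i := by
    have := dvd_trans hp1 (hy i)
    simpa using this
  have h2 : (p:ℤ) ∣ (B *ᵥ y) i := by
    have h3 : (B *ᵥ y) i = (B *ᵥ (fun i' => y i' - t * z₀ i')) i + t * (B *ᵥ z₀) i := by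
      have hdec : y = (fun i' => y i' - t * z₀ i') + t • z₀ := by
        funext i'; simp [Pi.add_apply, smul_eq_mul]
      calc (B *ᵥ y) i = (B *ᵥ ((fun i' => y i' - t * z₀ i') + t • z₀)) i := by rw [← hdec]
        _ = (B *ᵥ (fun i' => y i' - t * z₀ i')) i + t * (B *ᵥ z₀) i := by
            rw [Matrix.mulVec_add, Matrix.mulVec_smul]
            simp [smul_eq_mul]
    rw [h3]
    exact dvd_add (dvd_mulVec_of _ _ _ ht i) ((dvd_trans hp1 (hAz₀ i)).mul_left t)
  have := dvd_sub h2 h1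
  simpa using this
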